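/- arXiv:2105.09197 — 2 statements merged into one kernel-verified Lean document; each statement's English description precedes it below -/
import Mathlib

section
/- Let A ∈ 𝒮ⁿ[k] be a Robinson matrix and let d ∈ 𝔻ᵏ satisfy the path condition for A. Then for every upper-bound-cycle C of A, β⁺(C)ᵀ d > 0. -/
/-- The standard unit vector `χ_t ∈ ℤᵏ` (as a function `ℕ → ℤ`, supported on index `t`). -/
def chi (t : ℕ) : ℕ → ℤ := fun i => if i = t then 1 else 0

/-- The dot product `bᵀ d = Σ_{i=1}^k b_i d_i`. -/
def dotProd (k : ℕ) (b : ℕ → ℤ) (d : ℕ → ℝ) : ℝ :=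
  ∑ i ∈ Finset.Icc 1 k, (b i : ℝ) * d i

/-- `A ∈ 𝒮ⁿ[k]`: a symmetric matrix with entries in `{0,…,k}`, diagonal `k`,
entries increasing towards the diagonal. -/
def IsRobinson (n k : ℕ) (a : Fin n → Fin n → ℕ) : Prop :=
  (∀ u v, a u v = a v u) ∧ (∀ u, a u u = k) ∧ (∀ u v, a u v ≤ k) ∧
    ∀ u v w : Fin n, u < v → v < w → a u w ≤ a u v ∧ a u w ≤ a v w

/-- `d ∈ 𝔻ᵏ`: threshold vectors with `d 1 > d 2 > ⋯ > d k > 0`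
(values outside `{1,…,k}` are irrelevant). -/
def IsThreshold (k : ℕ) (d : ℕ → ℝ) : Prop :=
  (∀ i, 1 ≤ i → i < k → d (i + 1) < d i) ∧ 0 < d k

/-- Uniform embedding: for all pairs `u,v` and all `t ≤ k`,
`a u v = t ↔ d_{t+1} < |f v − f u| ≤ d_t`, with conventions `d_0 = +∞`, `d_{k+1} = −∞`. -/
def IsUnifEmb (n k : ℕ) (a : Fin n → Fin n → ℕ) (d : ℕ → ℝ)
    (f : Fin n → ℝ) : Prop :=
  ∀ u v : Fin n, ∀ t : ℕ, t ≤ k →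
    (a u v = t ↔ (t = k ∨ d (t + 1) < |f v - f u|) ∧ (t = 0 ∨ |f v - f u| ≤ d t))

/-- The strict inequality system: for all `u < v` and all `t ≤ k`,
`a u v = t ↔ d_{t+1} < f v − f u < d_t`, with conventions `d_0 = +∞`, `d_{k+1} = 0`. -/
def SatisfiesStrict (n k : ℕ) (a : Fin n → Fin n → ℕ) (d : ℕ → ℝ)
    (f : Fin n → ℝ) : Prop :=
  ∀ u v : Fin n, u < v → ∀ t : ℕ, t ≤ k →
    (a u v = t ↔ ((if t = k then (0 : ℝ) else d (t + 1)) < f v - f u) ∧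
      (t = 0 ∨ f v - f u < d t))

/-- `β⁺(x,y)`: for `x < y`, `β⁺(x,y) = χ_{a x y}` (junk value `χ_0` when `a x y = 0`,
where it is undefined); for `x > y`, `β⁺(x,y) = −β⁻(y,x)`. -/
def betaP {n : ℕ} (k : ℕ) (a : Fin n → Fin n → ℕ) (x y : Fin n) : ℕ → ℤ :=
  if x < y then chi (a x y)
  else if y < x then (if a x y = k then 0 else -chi (a x y + 1))
  else 0

/-- `β⁻(x,y)`: for `x < y`, `β⁻(x,y) = χ_{a x y + 1}` if `a x y < k` and `0` if `a x y = k`;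
for `x > y`, `β⁻(x,y) = −β⁺(y,x)`. -/
def betaM {n : ℕ} (k : ℕ) (a : Fin n → Fin n → ℕ) (x y : Fin n) : ℕ → ℤ :=
  if x < y then (if a x y = k then 0 else chi (a x y + 1))
  else if y < x then -chi (a x y)
  else 0

/-- `β⁺(W) = Σ_i β⁺(w_{i−1}, w_i)` over the steps of the walk `W`. -/
def betaPWalk {n : ℕ} (k : ℕ) (a : Fin n → Fin n → ℕ) (w : List (Fin n)) : ℕ → ℤ :=
  ((w.zip w.tail).map fun p => betaP k a p.1 p.2).sum

/-- `β⁻(W) = Σ_i β⁻(w_{i−1}, w_i)` over the steps of the walk `W`. -/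
def betaMWalk {n : ℕ} (k : ℕ) (a : Fin n → Fin n → ℕ) (w : List (Fin n)) : ℕ → ℤ :=
  ((w.zip w.tail).map fun p => betaM k a p.1 p.2).sum

/-- A `(u,v)`-upper-bound-walk: a walk from `u` to `v` with consecutive entries distinct,
in which every increasing step is an edge (`a x y ≥ 1`). -/
def IsUBWalk {n : ℕ} (a : Fin n → Fin n → ℕ) (u v : Fin n) (w : List (Fin n)) : Prop :=
  w.head? = some u ∧ w.getLast? = some v ∧
    List.Chain' (fun x y => x ≠ y ∧ (x < y → 1 ≤ a x y)) w

/-- A `(u,v)`-lower-bound-walk: a walk from `u` to `v` with consecutive entries distinct,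
in which every decreasing step is an edge (`a x y ≥ 1`). -/
def IsLBWalk {n : ℕ} (a : Fin n → Fin n → ℕ) (u v : Fin n) (w : List (Fin n)) : Prop :=
  w.head? = some u ∧ w.getLast? = some v ∧
    List.Chain' (fun x y => x ≠ y ∧ (y < x → 1 ≤ a x y)) w

/-- An upper-bound-cycle: a `(u,u)`-upper-bound-walk of length `p ≥ 2` in which
`u = w_0 = w_p` is the only repeated vertex. -/
def IsUBCycle {n : ℕ} (a : Fin n → Fin n → ℕ) (w : List (Fin n)) : Prop :=
  ∃ u : Fin n, IsUBWalk a u u w ∧ 3 ≤ w.length ∧ w.dropLast.Nodup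

/-- The path condition for `A` and `d`: for all `u < v`, every `(u,v)`-upper-bound-path `W₁`
and every `(u,v)`-lower-bound-path `W₂` satisfy `β⁻(W₂)ᵀ d < β⁺(W₁)ᵀ d`. -/
def PathCondition (n k : ℕ) (a : Fin n → Fin n → ℕ) (d : ℕ → ℝ) : Prop :=
  ∀ u v : Fin n, u < v → ∀ w₁ w₂ : List (Fin n),
    IsUBWalk a u v w₁ → w₁.Nodup → IsLBWalk a u v w₂ → w₂.Nodup →
      dotProd k (betaMWalk k a w₂) d < dotProd k (betaPWalk k a w₁) d

/-- The prefix-sum partial order `⪯` on `ℤᵏ`. -/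
def Preceq (k : ℕ) (x y : ℕ → ℤ) : Prop :=
  ∀ t, 1 ≤ t → t ≤ k → ∑ i ∈ Finset.Icc 1 t, x i ≤ ∑ i ∈ Finset.Icc 1 t, y i
section Helpers

variable {n k : ℕ} (a : Fin n → Fin n → ℕ)

lemma bP_nil : betaPWalk k a [] = 0 := rfl

lemma bP_single (x : Fin n) : betaPWalk k a [x] = 0 := by
  simp [betaPWalk]

lemma bP_cons (x y : Fin n) (l : List (Fin n)) :
    betaPWalk k a (x :: y :: l) = betaP k a x y + betaPWalk k a (y :: l) := by
  simp [betaPWalk]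

lemma bM_single (x : Fin n) : betaMWalk k a [x] = 0 := by
  simp [betaMWalk]

lemma bM_cons (x y : Fin n) (l : List (Fin n)) :
    betaMWalk k a (x :: y :: l) = betaM k a x y + betaMWalk k a (y :: l) := by
  simp [betaMWalk]

lemma bP_append (x : Fin n) (l₂ : List (Fin n)) :
    ∀ l : List (Fin n), betaPWalk k a (l ++ x :: l₂)
      = betaPWalk k a (l ++ [x]) + betaPWalk k a (x :: l₂)
  | [] => by simp [bP_single]
  | [b] => by
      simp only [List.cons_append, List.nil_append, bP_cons, bP_single, add_zero]
  | b :: c :: l => by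
      have IH := bP_append x l₂ (c :: l)
      simp only [List.cons_append] at IH ⊢
      rw [bP_cons, bP_cons, IH, add_assoc]

lemma bP_snoc (c b : Fin n) :
    ∀ l : List (Fin n), betaPWalk k a (l ++ [c, b])
      = betaPWalk k a (l ++ [c]) + betaP k a c b := by
  intro l
  have := bP_append (k := k) a c [b] l
  simpa [bP_cons, bP_single] using this

lemma bM_snoc (c b : Fin n) :
    ∀ l : List (Fin n), betaMWalk k a (l ++ [c, b])
      = betaMWalk k a (l ++ [c]) + betaM k a c b
  | [] => by simp [bM_cons, bM_single]
  | [e] => by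
      simp only [List.cons_append, List.nil_append, bM_cons, bM_single, add_zero]
  | e :: f :: l => by
      have IH := bM_snoc c b (f :: l)
      simp only [List.cons_append] at IH ⊢
      rw [bM_cons, bM_cons, IH, add_assoc]

lemma betaP_swap (hsym : ∀ u v, a u v = a v u) (x y : Fin n) :
    betaP k a y x = - betaM k a x y := by
  rcases lt_trichotomy x y with h | h | h
  · simp only [betaP, betaM, if_neg (not_lt_of_gt h), if_pos h]
    rw [hsym x y]
    split <;> simp
  · simp [betaP, betaM, h]
  · simp only [betaP, betaM, if_neg (not_lt_of_gt h), if_pos h, neg_neg]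
    rw [hsym x y]

lemma betaM_swap (hsym : ∀ u v, a u v = a v u) (x y : Fin n) :
    betaM k a y x = - betaP k a x y := by
  rw [betaP_swap a hsym y x, neg_neg]

lemma bM_reverse (hsym : ∀ u v, a u v = a v u) :
    ∀ l : List (Fin n), betaMWalk k a l.reverse = - betaPWalk k a l
  | [] => by simp [betaMWalk, betaPWalk]
  | [x] => by simp [bM_single, bP_single]
  | x :: y :: l => by
      have IH := bM_reverse hsym (y :: l)
      have hrev : (x :: y :: l).reverse = l.reverse ++ [y, x] := by
        simp
      rw [hrev, bM_snoc, show l.reverse ++ [y] = (y :: l).reverse by simp, IH,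
        betaM_swap a hsym x y, bP_cons]
      abel

lemma dot_add (b₁ b₂ : ℕ → ℤ) (d : ℕ → ℝ) :
    dotProd k (b₁ + b₂) d = dotProd k b₁ d + dotProd k b₂ d := by
  simp [dotProd, add_mul, Finset.sum_add_distrib]

lemma dot_neg (b : ℕ → ℤ) (d : ℕ → ℝ) :
    dotProd k (-b) d = - dotProd k b d := by
  simp [dotProd, Finset.sum_neg_distrib]

end Helpers

/-- Lemma 2: if `d ∈ 𝔻ᵏ` satisfies the path condition for the Robinson
matrix `A`, then every upper-bound-cycle `C` satisfies `β⁺(C)ᵀ d > 0`. -/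
theorem statement5 (n k : ℕ) (hn : 1 ≤ n) (hk : 1 ≤ k) (a : Fin n → Fin n → ℕ)
    (hA : IsRobinson n k a) (d : ℕ → ℝ) (hd : IsThreshold k d)
    (hpc : PathCondition n k a d) (C : List (Fin n)) (hC : IsUBCycle a C) :
    0 < dotProd k (betaPWalk k a C) d := by
  obtain ⟨u, ⟨hhead, hlast, hchain⟩, hlen, hnodup⟩ := hC
  have hsym := hA.1
  obtain ⟨t, rfl⟩ : ∃ t, C = u :: t := by
    cases C with
    | nil => simp at hhead
    | cons h t =>
        simp only [List.head?_cons, Option.some.injEq] at hhead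
        exact ⟨t, by rw [hhead]⟩
  have ht : t ≠ [] := by
    intro h; subst h; simp at hlen
  have hgl : t.getLast ht = u := by
    have h1 : (u :: t).getLast (by simp) = u := by
      rw [List.getLast?_eq_getLast (l := u :: t) (by simp)] at hlast
      exact Option.some.inj hlast
    rwa [List.getLast_cons ht] at h1
  obtain ⟨t', rfl⟩ : ∃ t', t = t' ++ [u] := by
    refine ⟨t.dropLast, ?_⟩
    conv_lhs => rw [← List.dropLast_append_getLast ht, hgl]
  have hC_eq : u :: (t' ++ [u]) = (u :: t') ++ [u] := by simp
  have ht' : t' ≠ [] := by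
    intro h; subst h; simp at hlen
  rw [hC_eq] at hchain
  have hnodup' : (u :: t').Nodup := by
    rw [hC_eq, List.dropLast_concat] at hnodup; exact hnodup
  by_cases hex : ∃ x ∈ t', x < u
  · -- split vertex below u exists
    obtain ⟨x, hxmem, hxu⟩ := hex
    obtain ⟨s₁, s₂, rfl⟩ := List.append_of_mem hxmem
    have heq : (u :: (s₁ ++ x :: s₂)) ++ [u] = (u :: s₁) ++ (x :: (s₂ ++ [u])) := by
      simp
    rw [heq] at hchain
    obtain ⟨hch1, hch2, hch3⟩ := List.isChain_append.mp hchain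
    set P₁ : List (Fin n) := (u :: s₁) ++ [x] with hP₁
    set P₂ : List (Fin n) := x :: (s₂ ++ [u]) with hP₂
    have hchP₁ : List.Chain' (fun p q => p ≠ q ∧ (p < q → 1 ≤ a p q)) P₁ := by
      refine List.isChain_append.mpr ⟨hch1, List.isChain_singleton x, ?_⟩
      intro p hp q hq
      simp only [List.head?_cons, Option.mem_def, Option.some.injEq] at hq
      subst hq
      exact hch3 p hp x (by simp [hP₂])
    -- nodup facts
    have hu_nm : u ∉ s₁ ++ x :: s₂ := (List.nodup_cons.mp hnodup').1
    have hnd : (s₁ ++ x :: s₂).Nodup := (List.nodup_cons.mp hnodup').2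
    obtain ⟨hnd1, hnd2, hdisj⟩ := List.nodup_append.mp hnd
    have hNodP₂ : P₂.Nodup := by
      rw [hP₂, show x :: (s₂ ++ [u]) = (x :: s₂) ++ [u] by simp]
      refine List.nodup_append.mpr ⟨hnd2, List.nodup_singleton u, ?_⟩
      intro y hy z hy2 hyz
      simp only [List.mem_singleton] at hy2
      subst hy2
      rw [hyz] at hy
      exact hu_nm (List.mem_append.mpr (Or.inr hy))
    have hNodP₁ : P₁.Nodup := by
      rw [hP₁, show (u :: s₁) ++ [x] = u :: (s₁ ++ [x]) by simp]
      refine List.nodup_cons.mpr ⟨?_, ?_⟩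
      · intro hmem
        rcases List.mem_append.mp hmem with h | h
        · exact hu_nm (List.mem_append.mpr (Or.inl h))
        · simp only [List.mem_singleton] at h
          exact absurd h.symm (ne_of_lt hxu)
      · refine List.nodup_append.mpr ⟨hnd1, List.nodup_singleton x, ?_⟩
        intro y hy z hy2 hyz
        simp only [List.mem_singleton] at hy2
        subst hy2
        exact hdisj y hy z (by simp) hyz
    have hUB : IsUBWalk a x u P₂ := by
      refine ⟨by simp [hP₂], ?_, hch2⟩
      rw [hP₂, show x :: (s₂ ++ [u]) = (x :: s₂) ++ [u] by simp]
      exact List.getLast?_concat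
    have hLB : IsLBWalk a x u P₁.reverse := by
      refine ⟨?_, ?_, ?_⟩
      · rw [List.head?_reverse, hP₁]
        exact List.getLast?_concat
      · rw [List.getLast?_reverse, hP₁]
        simp
      · show List.IsChain _ P₁.reverse
        rw [List.isChain_reverse]
        refine hchP₁.imp ?_
        intro p q hpq
        exact ⟨hpq.1.symm, fun h => (hsym q p) ▸ hpq.2 h⟩
    have hpc' := hpc x u hxu P₂ P₁.reverse hUB hNodP₂ hLB (List.nodup_reverse.mpr hNodP₁)
    rw [bM_reverse a hsym P₁, dot_neg] at hpc'
    have hsplit : betaPWalk k a ((u :: (s₁ ++ x :: s₂)) ++ [u])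
        = betaPWalk k a P₁ + betaPWalk k a P₂ := by
      rw [heq]
      exact bP_append (k := k) a x (s₂ ++ [u]) (u :: s₁)
    rw [← hC_eq] at hsplit
    rw [hsplit, dot_add]
    linarith
  · -- u is the minimum
    push_neg at hex
    set v := t'.getLast ht' with hv
    have hvmem : v ∈ t' := List.getLast_mem ht'
    have hunm : u ∉ t' := (List.nodup_cons.mp hnodup').1
    have huv : u < v := lt_of_le_of_ne (hex v hvmem) (fun h => hunm (h ▸ hvmem))
    have hglv : (u :: t').getLast (by simp) = v := List.getLast_cons ht'
    have hUB : IsUBWalk a u v (u :: t') := by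
      refine ⟨by simp, ?_, (List.isChain_append.mp hchain).1⟩
      rw [List.getLast?_eq_getLast (l := u :: t') (by simp), hglv]
    have hLB : IsLBWalk a u v [u, v] := by
      refine ⟨by simp, by simp, ?_⟩
      exact List.isChain_cons_cons.mpr ⟨⟨ne_of_lt huv, fun h => absurd h (not_lt_of_gt huv)⟩,
        List.isChain_singleton v⟩
    have hpc' := hpc u v huv (u :: t') [u, v] hUB hnodup' hLB (by simp [(ne_of_lt huv)])
    rw [bM_cons, bM_single, add_zero] at hpc'
    have hdecomp : (u :: t') ++ [u] = (u :: t').dropLast ++ [v, u] := by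
      conv_lhs => rw [← List.dropLast_append_getLast (l := u :: t') (by simp), hglv]
      simp
    have hsplit : betaPWalk k a ((u :: t') ++ [u])
        = betaPWalk k a (u :: t') + betaP k a v u := by
      rw [hdecomp, bP_snoc]
      congr 1
      conv_rhs => rw [← List.dropLast_append_getLast (l := u :: t') (by simp), hglv]
    rw [← hC_eq] at hsplit
    rw [hsplit, betaP_swap a hsym u v, dot_add, dot_neg]
    linarith
end

section
/- Let A ∈ 𝒮ⁿ[k] be a Robinson matrix, let 𝒞 be the set of upper-bound-cycles of A, and let B = {β⁺(C) : C ∈ 𝒞}. If d ∈ 𝔻ᵏ satisfies β⁺(C)ᵀ d > 0 for every C ∈ 𝒞 such that β⁺(C) is a minimal element of B under the partial order ⪯, then β⁺(C)ᵀ d > 0 for every C ∈ 𝒞. -/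
/-- Abel summation identity over `Icc 1 k`. -/
lemma abel_sum (x : ℕ → ℤ) (d : ℕ → ℝ) :
    ∀ k : ℕ, ∑ i ∈ Finset.Icc 1 k, (x i : ℝ) * d i
      = ∑ t ∈ Finset.Icc 1 k, ((∑ i ∈ Finset.Icc 1 t, x i : ℤ) : ℝ) * (d t - d (t + 1))
        + ((∑ i ∈ Finset.Icc 1 k, x i : ℤ) : ℝ) * d (k + 1) := by
  intro k
  induction k with
  | zero => simp
  | succ k ih =>
    rw [Finset.sum_Icc_succ_top (by omega : 1 ≤ k + 1), ih,
        Finset.sum_Icc_succ_top (by omega : 1 ≤ k + 1)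
          (f := fun t => ((∑ i ∈ Finset.Icc 1 t, x i : ℤ) : ℝ) * (d t - d (t + 1)))]
    have hS : ((∑ i ∈ Finset.Icc 1 (k + 1), x i : ℤ) : ℝ)
        = ((∑ i ∈ Finset.Icc 1 k, x i : ℤ) : ℝ) + (x (k + 1) : ℝ) := by
      rw [Finset.sum_Icc_succ_top (by omega : 1 ≤ k + 1)]; push_cast; ring
    rw [hS]
    ring

/-- Monotonicity of the dot product with a threshold vector under `⪯`. -/
lemma dotProd_mono (k : ℕ) (x y : ℕ → ℤ) (d : ℕ → ℝ) (hd : IsThreshold k d)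
    (h : Preceq k x y) : dotProd k x d ≤ dotProd k y d := by
  set d' : ℕ → ℝ := fun i => if i ≤ k then d i else 0 with hd'
  have hagree : ∀ z : ℕ → ℤ, dotProd k z d = dotProd k z d' := by
    intro z
    unfold dotProd
    apply Finset.sum_congr rfl
    intro i hi
    simp only [Finset.mem_Icc] at hi
    rw [hd']
    simp [hi.2]
  rw [hagree x, hagree y]
  unfold dotProd
  rw [abel_sum x d' k, abel_sum y d' k]
  have hlast : d' (k + 1) = 0 := by rw [hd']; simp
  rw [hlast]
  simp only [mul_zero, add_zero]
  apply Finset.sum_le_sum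
  intro t ht
  simp only [Finset.mem_Icc] at ht
  apply mul_le_mul_of_nonneg_right
  · exact_mod_cast h t ht.1 ht.2
  · by_cases hc : t < k
    · have h1 : d' t = d t := by rw [hd']; simp [show t ≤ k by omega]
      have h2 : d' (t + 1) = d (t + 1) := by rw [hd']; simp [show t + 1 ≤ k by omega]
      rw [h1, h2]
      have := hd.1 t ht.1 hc
      linarith
    · have htk : t = k := by omega
      subst htk
      have h1 : d' t = d t := by rw [hd']; simp
      have h2 : d' (t + 1) = 0 := by rw [hd']; simp
      rw [h1, h2]
      linarith [hd.2]

lemma sum_Icc_list_sum (t : ℕ) : ∀ (l : List (ℕ → ℤ)),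
    ∑ i ∈ Finset.Icc 1 t, l.sum i = (l.map fun f => ∑ i ∈ Finset.Icc 1 t, f i).sum
  | [] => by simp
  | f :: l => by
    simp only [List.sum_cons, List.map_cons, Pi.add_apply, Finset.sum_add_distrib,
      sum_Icc_list_sum t l]

lemma betaP_prefix_lb {n : ℕ} (k : ℕ) (a : Fin n → Fin n → ℕ) (x y : Fin n) (t : ℕ) :
    -1 ≤ ∑ i ∈ Finset.Icc 1 t, betaP k a x y i := by
  have hchi : ∀ s, ∑ i ∈ Finset.Icc 1 t, chi s i
      = if s ∈ Finset.Icc 1 t then 1 else 0 := by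
    intro s; simp [chi, Finset.sum_ite_eq']
  unfold betaP
  split_ifs with h1 h2 h3
  · rw [hchi]; split_ifs <;> norm_num
  · simp
  · have hneg : ∑ i ∈ Finset.Icc 1 t, (-chi (a x y + 1)) i
        = -∑ i ∈ Finset.Icc 1 t, chi (a x y + 1) i := by
      simp
    rw [hneg, hchi]; split_ifs <;> norm_num
  · simp

lemma list_sum_lb (l : List ℤ) (h : ∀ x ∈ l, -1 ≤ x) : -(l.length : ℤ) ≤ l.sum := by
  induction l with
  | nil => simp
  | cons x l ih =>
    have h1 := h x List.mem_cons_self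
    have h2 := ih (fun y hy => h y (List.mem_cons_of_mem x hy))
    simp only [List.sum_cons, List.length_cons]
    push_cast
    linarith

lemma walk_prefix_lb {n : ℕ} (k : ℕ) (a : Fin n → Fin n → ℕ) (w : List (Fin n)) (t : ℕ) :
    -(w.length : ℤ) ≤ ∑ i ∈ Finset.Icc 1 t, betaPWalk k a w i := by
  unfold betaPWalk
  rw [sum_Icc_list_sum, List.map_map]
  have hlb := list_sum_lb ((w.zip w.tail).map
      ((fun f => ∑ i ∈ Finset.Icc 1 t, f i) ∘ fun p => betaP k a p.1 p.2))
    (by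
      intro x hx
      obtain ⟨p, _, rfl⟩ := List.mem_map.mp hx
      exact betaP_prefix_lb k a p.1 p.2 t)
  have hlen : ((w.zip w.tail).map
      ((fun f => ∑ i ∈ Finset.Icc 1 t, f i) ∘ fun p => betaP k a p.1 p.2)).length
      ≤ w.length := by
    rw [List.length_map, List.length_zip]
    exact min_le_left _ _
  refine le_trans ?_ hlb
  exact neg_le_neg (by exact_mod_cast hlen)

/-- Corollary 2: if `d ∈ 𝔻ᵏ` satisfies `β⁺(C)ᵀ d > 0` for every
upper-bound-cycle `C` whose bound `β⁺(C)` is minimal under `⪯` among all cycle bounds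
`B = {β⁺(C') : C' an upper-bound-cycle}`, then `β⁺(C)ᵀ d > 0` for every upper-bound-cycle. -/
theorem statement13 (n k : ℕ) (hn : 1 ≤ n) (hk : 1 ≤ k) (a : Fin n → Fin n → ℕ)
    (hA : IsRobinson n k a) (d : ℕ → ℝ) (hd : IsThreshold k d)
    (hmin : ∀ C : List (Fin n), IsUBCycle a C →
      (∀ C' : List (Fin n), IsUBCycle a C' →
        Preceq k (betaPWalk k a C') (betaPWalk k a C) →
        Preceq k (betaPWalk k a C) (betaPWalk k a C')) →
      0 < dotProd k (betaPWalk k a C) d) :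
    ∀ C : List (Fin n), IsUBCycle a C → 0 < dotProd k (betaPWalk k a C) d := by
  set M : List (Fin n) → ℤ :=
    fun C => ∑ t ∈ Finset.Icc 1 k, ∑ i ∈ Finset.Icc 1 t, betaPWalk k a C i with hMdef
  have hbound : ∀ C, IsUBCycle a C → -((k : ℤ) * (n + 1)) ≤ M C := by
    intro C hC
    obtain ⟨u, hwalk, hlen3, hnodup⟩ := hC
    have hcard : C.dropLast.length ≤ n := by
      have := hnodup.length_le_card
      simpa using this
    have hlenn : C.length ≤ n + 1 := by
      have := C.length_dropLast
      omega
    have hterm : ∀ t ∈ Finset.Icc 1 k,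
        -((n : ℤ) + 1) ≤ ∑ i ∈ Finset.Icc 1 t, betaPWalk k a C i := by
      intro t _
      have h1 := walk_prefix_lb k a C t
      have h2 : -((n : ℤ) + 1) ≤ -(C.length : ℤ) := by
        have : (C.length : ℤ) ≤ (n : ℤ) + 1 := by exact_mod_cast hlenn
        linarith
      linarith
    have hsum := Finset.sum_le_sum hterm
    have hconst : ∑ _t ∈ Finset.Icc 1 k, (-((n : ℤ) + 1)) = -((k : ℤ) * (n + 1)) := by
      rw [Finset.sum_const, Nat.card_Icc]
      simp
      ring
    rw [hconst] at hsum
    exact hsum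
  have key : ∀ N : ℕ, ∀ C, IsUBCycle a C → ((k : ℤ) * (n + 1) + 1 + M C).toNat ≤ N →
      0 < dotProd k (betaPWalk k a C) d := by
    intro N
    induction N with
    | zero =>
      intro C hC h0
      have hb := hbound C hC
      omega
    | succ N ih =>
      intro C hC hle
      by_cases hminC : ∀ C' : List (Fin n), IsUBCycle a C' →
          Preceq k (betaPWalk k a C') (betaPWalk k a C) →
          Preceq k (betaPWalk k a C) (betaPWalk k a C')
      · exact hmin C hC hminC
      · push_neg at hminC
        obtain ⟨C', hC', hpre, hnpre⟩ := hminC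
        have hMlt : M C' < M C := by
          apply Finset.sum_lt_sum
          · intro t ht
            simp only [Finset.mem_Icc] at ht
            exact hpre t ht.1 ht.2
          · unfold Preceq at hnpre
            push_neg at hnpre
            obtain ⟨t, ht1, ht2, hlt⟩ := hnpre
            exact ⟨t, Finset.mem_Icc.mpr ⟨ht1, ht2⟩, hlt⟩
        have hb' := hbound C' hC'
        have hb := hbound C hC
        have hrec : ((k : ℤ) * (n + 1) + 1 + M C').toNat ≤ N := by omega
        have hpos := ih C' hC' hrec
        have hmono := dotProd_mono k (betaPWalk k a C') (betaPWalk k a C) d hd hpre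
        linarith
  intro C hC
  exact key ((k : ℤ) * (n + 1) + 1 + M C).toNat C hC le_rfl
end
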